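/- Let H be a connected k-uniform hypergraph (k ≥ 2) on n ≥ 2 vertices with at least one edge, and let ρ be the unique eigenvalue of the signless Laplacian tensor 𝒬(H) admitting a strictly positive eigenvector. Then ρ is the unique eigenvalue of 𝒬(H) of maximum modulus: every eigenvalue λ of 𝒬(H) with |λ| = ρ satisfies λ = ρ. -/

import Mathlib

open Finset

/-- `(𝒜(H) x^{k-1})_v = ∑_{e ∈ E(H), v ∈ e} ∏_{u ∈ e∖{v}} x_u` for a hypergraph with
edge set `E` on vertex set `Fin n`. -/
noncomputable def adjApply {n : ℕ} (E : Finset (Finset (Fin n))) (x : Fin n → ℂ)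
    (v : Fin n) : ℂ :=
  ∑ e ∈ E.filter (fun e => v ∈ e), ∏ u ∈ e.erase v, x u

/-- The degree of a vertex `v`: the number of edges containing `v`. -/
def hDeg {n : ℕ} (E : Finset (Finset (Fin n))) (v : Fin n) : ℕ :=
  (E.filter (fun e => v ∈ e)).card

/-- The action `(𝒬(H) x^{k-1})_v = d_v x_v^{k-1} + (𝒜(H) x^{k-1})_v` of the signless
Laplacian tensor. -/
noncomputable def qApply {n : ℕ} (k : ℕ) (E : Finset (Finset (Fin n))) (x : Fin n → ℂ)
    (v : Fin n) : ℂ :=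
  (hDeg E v : ℂ) * x v ^ (k - 1) + adjApply E x v

/-- A hypergraph is connected if any two vertices are joined by a sequence of vertices
in which consecutive vertices lie in a common edge. -/
def HConnected {n : ℕ} (E : Finset (Finset (Fin n))) : Prop :=
  ∀ u v : Fin n, Relation.ReflTransGen (fun a b => ∃ e ∈ E, a ∈ e ∧ b ∈ e) u v

/-- A complex number whose real part equals its absolute value is that (real) value. -/
lemma re_eq_abs_imp {z : ℂ} (h : z.re = ‖z‖) : z = (‖z‖ : ℂ) := by
  have h2 : (‖z‖) ^ 2 = z.re ^ 2 + z.im ^ 2 := by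
    rw [Complex.sq_norm, Complex.normSq_apply]; ring
  rw [h] at h2
  have h3 : z.im ^ 2 = 0 := by linarith
  have him : z.im = 0 := by
    have := sq_nonneg z.im
    nlinarith
  apply Complex.ext
  · simpa using h
  · simpa using him

/-- for a connected `k`-uniform hypergraph `H` with Perron–Frobenius
eigenvalue `ρ` of the signless Laplacian tensor `𝒬(H)`, every eigenvalue `λ` of `𝒬(H)`
with `|λ| = ρ` satisfies `λ = ρ`. -/
theorem stmt16 (k n : ℕ) (hk : 2 ≤ k) (hn : 2 ≤ n)
    (E : Finset (Finset (Fin n))) (hunif : ∀ e ∈ E, e.card = k) (hne : E.Nonempty)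
    (hconn : HConnected E)
    (ρ : ℝ) (y : Fin n → ℝ) (hy : ∀ i, 0 < y i)
    (hρ : ∀ v, qApply k E (fun i => (y i : ℂ)) v = (ρ : ℂ) * (y v : ℂ) ^ (k - 1))
    (lam : ℂ) (hlam : ‖lam‖ = ρ)
    (hev : ∃ x : Fin n → ℂ, x ≠ 0 ∧ ∀ v, qApply k E x v = lam * x v ^ (k - 1)) :
    lam = (ρ : ℂ) := by
  obtain ⟨x, hx0, hx⟩ := hev
  set m := k - 1 with hm
  -- every vertex has positive degree
  have hdeg : ∀ v : Fin n, 0 < hDeg E v := by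
    intro v
    have : Nontrivial (Fin n) := Fin.nontrivial_iff_two_le.2 hn
    obtain ⟨u, hu⟩ := exists_ne v
    rcases (hconn v u).cases_head with h | ⟨b, ⟨e, he, hve, _⟩, _⟩
    · exact absurd h.symm hu
    · exact Finset.card_pos.2 ⟨e, Finset.mem_filter.2 ⟨he, hve⟩⟩
  -- the real eigen-equation for y
  have hρR : ∀ v, (hDeg E v : ℝ) * y v ^ m +
      ∑ e ∈ E.filter (fun e => v ∈ e), ∏ u ∈ e.erase v, y u = ρ * y v ^ m := by
    intro v
    have h2 : (((hDeg E v : ℝ) * y v ^ m +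
        ∑ e ∈ E.filter (fun e => v ∈ e), ∏ u ∈ e.erase v, y u : ℝ) : ℂ)
        = ((ρ * y v ^ m : ℝ) : ℂ) := by
      push_cast
      simpa [qApply, adjApply] using hρ v
    exact_mod_cast h2
  -- positivity of ρ
  have hρpos : 0 < ρ := by
    set v0 : Fin n := ⟨0, by omega⟩
    have hA : (0:ℝ) ≤ ∑ e ∈ E.filter (fun e => v0 ∈ e), ∏ u ∈ e.erase v0, y u :=
      Finset.sum_nonneg fun e _ => Finset.prod_nonneg fun u _ => (hy u).le
    have hd : (1:ℝ) ≤ (hDeg E v0 : ℝ) := by exact_mod_cast hdeg v0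
    have hp : 0 < y v0 ^ m := pow_pos (hy v0) m
    nlinarith [hρR v0]
  -- choose vertex maximizing |x v| / y v
  obtain ⟨v, -, hvmax⟩ := Finset.exists_max_image Finset.univ
    (fun u => ‖x u‖ / y u) ⟨⟨0, by omega⟩, Finset.mem_univ _⟩
  set t : ℝ := ‖x v‖ / y v with ht
  have hbound : ∀ u, ‖x u‖ ≤ t * y u := by
    intro u
    exact (div_le_iff₀ (hy u)).1 (hvmax u (Finset.mem_univ u))
  have hxv : ‖x v‖ = t * y v := by
    rw [ht, div_mul_cancel₀ _ (hy v).ne']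
  have htpos : 0 < t := by
    obtain ⟨u, hu⟩ := Function.ne_iff.1 hx0
    have h1 : 0 < ‖x u‖ := norm_pos_iff.mpr (by simpa using hu)
    have := hbound u
    nlinarith [hy u]
  have hxvpos : 0 < ‖x v‖ := by
    rw [hxv]; exact mul_pos htpos (hy v)
  have hxvne : x v ≠ 0 := by
    intro h; rw [h] at hxvpos; simp at hxvpos
  -- notation
  set F := E.filter (fun e => v ∈ e) with hF
  set S : ℂ := lam * x v ^ m with hS
  have hSdef : (hDeg E v : ℂ) * x v ^ m + ∑ e ∈ F, ∏ u ∈ e.erase v, x u = S := by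
    simpa [qApply, adjApply, hF, hS] using hx v
  have habs_xm : ‖x v ^ m‖ = t ^ m * y v ^ m := by
    rw [norm_pow, hxv, mul_pow]
  have habsS : ‖S‖ = ρ * (t ^ m * y v ^ m) := by
    rw [hS, norm_mul, hlam, habs_xm]
  have hSpos : 0 < ‖S‖ := by
    rw [habsS]
    exact mul_pos hρpos (mul_pos (pow_pos htpos m) (pow_pos (hy v) m))
  -- per-edge bound on |∏ x u|
  have hedge : ∀ e ∈ F, ‖∏ u ∈ e.erase v, x u‖ ≤ t ^ m * ∏ u ∈ e.erase v, y u := by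
    intro e he
    obtain ⟨heE, hve⟩ := Finset.mem_filter.1 he
    have hcard : (e.erase v).card = m := by
      rw [Finset.card_erase_of_mem hve, hunif e heE]
    calc ‖∏ u ∈ e.erase v, x u‖ = ∏ u ∈ e.erase v, ‖x u‖ :=
          Complex.norm_prod _ _
    _ ≤ ∏ u ∈ e.erase v, (t * y u) := by
        apply Finset.prod_le_prod (fun u _ => (norm_nonneg _)) (fun u _ => hbound u)
    _ = t ^ m * ∏ u ∈ e.erase v, y u := by
        rw [Finset.prod_mul_distrib, Finset.prod_const, hcard]
  -- key quantity
  set R : ℝ := ((starRingEnd ℂ) S * x v ^ m).re with hR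
  have hRle : R ≤ ‖S‖ * (t ^ m * y v ^ m) := by
    calc R ≤ ‖(starRingEnd ℂ) S * x v ^ m‖ := Complex.re_le_norm _
    _ = ‖S‖ * (t ^ m * y v ^ m) := by rw [norm_mul, Complex.norm_conj, habs_xm]
  -- the main inequality chain giving R ≥ |S| * t^m * y v ^ m
  have hmain : ‖S‖ ^ 2 ≤ (hDeg E v : ℝ) * R +
      ‖S‖ * t ^ m * (∑ e ∈ F, ∏ u ∈ e.erase v, y u) := by
    have h1 : ((starRingEnd ℂ) S * S).re = ‖S‖ ^ 2 := by
      rw [mul_comm, Complex.mul_conj, Complex.sq_norm]; simp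
    have h2 : (starRingEnd ℂ) S * S
        = (hDeg E v : ℂ) * ((starRingEnd ℂ) S * x v ^ m)
          + ∑ e ∈ F, (starRingEnd ℂ) S * ∏ u ∈ e.erase v, x u := by
      calc (starRingEnd ℂ) S * S
          = (starRingEnd ℂ) S * ((hDeg E v : ℂ) * x v ^ m
            + ∑ e ∈ F, ∏ u ∈ e.erase v, x u) := by rw [hSdef]
      _ = (hDeg E v : ℂ) * ((starRingEnd ℂ) S * x v ^ m)
          + ∑ e ∈ F, (starRingEnd ℂ) S * ∏ u ∈ e.erase v, x u := by
          rw [mul_add, Finset.mul_sum]; ring_nf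
    have h3 : ‖S‖ ^ 2 = (hDeg E v : ℝ) * R
        + ∑ e ∈ F, ((starRingEnd ℂ) S * ∏ u ∈ e.erase v, x u).re := by
      rw [← h1, h2, Complex.add_re, Complex.re_sum]
      congr 1
      rw [show ((hDeg E v : ℕ) : ℂ) = ((hDeg E v : ℝ) : ℂ) by push_cast; ring,
        Complex.re_ofReal_mul]
    rw [h3, Finset.mul_sum]
    gcongr with e he
    calc ((starRingEnd ℂ) S * ∏ u ∈ e.erase v, x u).re
        ≤ ‖(starRingEnd ℂ) S * ∏ u ∈ e.erase v, x u‖ := Complex.re_le_norm _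
    _ = ‖S‖ * ‖∏ u ∈ e.erase v, x u‖ := by
        rw [norm_mul, Complex.norm_conj]
    _ ≤ ‖S‖ * (t ^ m * ∏ u ∈ e.erase v, y u) :=
        mul_le_mul_of_nonneg_left (hedge e he) (norm_nonneg S)
    _ = ‖S‖ * t ^ m * ∏ u ∈ e.erase v, y u := by ring
  have hsumY : ∑ e ∈ F, ∏ u ∈ e.erase v, y u = ρ * y v ^ m - (hDeg E v : ℝ) * y v ^ m := by
    have := hρR v
    rw [← hF] at this
    linarith
  have hdv : (1:ℝ) ≤ (hDeg E v : ℝ) := by exact_mod_cast hdeg v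
  have hReq : R = ‖S‖ * (t ^ m * y v ^ m) := by
    rw [hsumY] at hmain
    have hS2 : ‖S‖ ^ 2 = ρ * (t ^ m * y v ^ m) * ‖S‖ := by
      rw [habsS]; ring
    have hd0 : (0:ℝ) < (hDeg E v : ℝ) := by linarith
    have key : (hDeg E v : ℝ) * (‖S‖ * (t ^ m * y v ^ m))
        ≤ (hDeg E v : ℝ) * R := by nlinarith [hmain, hS2]
    have hge : ‖S‖ * (t ^ m * y v ^ m) ≤ R :=
      le_of_mul_le_mul_left key hd0
    linarith [hRle]
  -- triangle equality: conj S * x v ^ m is the nonnegative real |S| * |x v ^ m|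
  have hceq : (starRingEnd ℂ) S * x v ^ m
      = ((‖S‖ * (t ^ m * y v ^ m) : ℝ) : ℂ) := by
    have habs : ‖(starRingEnd ℂ) S * x v ^ m‖
        = ‖S‖ * (t ^ m * y v ^ m) := by
      rw [norm_mul, Complex.norm_conj, habs_xm]
    have := re_eq_abs_imp (z := (starRingEnd ℂ) S * x v ^ m) (by rw [habs, ← hReq, hR])
    rw [this, habs]
  -- multiply by S and cancel
  have hmul : ((‖S‖ ^ 2 : ℝ) : ℂ) * x v ^ m
      = ((‖S‖ * (t ^ m * y v ^ m) : ℝ) : ℂ) * (lam * x v ^ m) := by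
    have h1 : S * ((starRingEnd ℂ) S * x v ^ m)
        = ((‖S‖ ^ 2 : ℝ) : ℂ) * x v ^ m := by
      rw [← mul_assoc, Complex.mul_conj, ← Complex.sq_norm]
    rw [← h1, hceq, hS]; ring
  have hxm_ne : x v ^ m ≠ 0 := pow_ne_zero m hxvne
  have hc1 : ((‖S‖ ^ 2 : ℝ) : ℂ)
      = ((‖S‖ * (t ^ m * y v ^ m) : ℝ) : ℂ) * lam :=
    mul_right_cancel₀ hxm_ne (by rw [hmul]; ring)
  have hane : ((‖S‖ * (t ^ m * y v ^ m) : ℝ) : ℂ) ≠ 0 := by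
    have : (0:ℝ) < ‖S‖ * (t ^ m * y v ^ m) :=
      mul_pos hSpos (mul_pos (pow_pos htpos m) (pow_pos (hy v) m))
    exact_mod_cast this.ne'
  have hfinal : ((‖S‖ * (t ^ m * y v ^ m) : ℝ) : ℂ) * lam
      = ((‖S‖ * (t ^ m * y v ^ m) : ℝ) : ℂ) * (ρ : ℂ) := by
    rw [← hc1, habsS]; push_cast; ring
  exact mul_left_cancel₀ hane hfinal
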